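/- Let (R,𝔪) be a commutative noetherian local ring and M a finitely generated R-module with depth_R M = 0. Then the center Z(End_R(M)) of the endomorphism ring of M is a local ring. -/

import Mathlib

open CategoryTheory

/-- The depth of a module `M` over a noetherian local ring `A`:
`inf { n | Ext^n_A(A/𝔪, M) ≠ 0 }`, with the convention that the depth of the
zero module is `∞` (the infimum of the empty set). -/
noncomputable def moduleDepth (A : Type) [CommRing A] [IsLocalRing A]
    (M : Type) [AddCommGroup M] [Module A M] : ℕ∞ :=
  sInf {d : ℕ∞ | ∃ n : ℕ, d = n ∧
    Nontrivial (((Ext A (ModuleCat A) n).obj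
      (Opposite.op (ModuleCat.of A (IsLocalRing.ResidueField A)))).obj (ModuleCat.of A M))}

open CategoryTheory Limits


lemma exists_hom_of_nontrivial_ext0 (A : Type) [CommRing A] (X Y : ModuleCat A)
    (h : Nontrivial (((Ext A (ModuleCat A) 0).obj (Opposite.op X)).obj Y)) :
    ∃ g : X ⟶ Y, g ≠ 0 := by
  haveI := h
  obtain ⟨P⟩ := (HasProjectiveResolution.out (Z := X)) 
  let K := P.complex.linearYonedaObj A Y
  let i1 : ((Ext A (ModuleCat A) 0).obj (Opposite.op X)).obj Y ≅ K.homology 0 := P.isoExt 0 Y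
  haveI hK : Nontrivial (K.homology 0) := i1.symm.toLinearEquiv.toEquiv.nontrivial
  let i2 : K.cycles 0 ≅ K.homology 0 :=
    K.isoHomologyπ 0 0 (by simp) (K.shape 0 0 (by simp))
  haveI hC : Nontrivial (K.cycles 0) := i2.toLinearEquiv.toEquiv.nontrivial
  obtain ⟨c, hc⟩ := exists_ne (0 : K.cycles 0)
  have hmono : Function.Injective (K.iCycles 0) := (ModuleCat.mono_iff_injective _).1 inferInstance
  set g : K.X 0 := K.iCycles 0 c with hgdef
  have hgne : g ≠ 0 := by
    intro h0
    apply hc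
    apply hmono
    simpa [hgdef] using h0
  have hcycle : K.d 0 1 g = 0 := by
    calc K.d 0 1 (K.iCycles 0 c) = (K.iCycles 0 ≫ K.d 0 1) c := rfl
      _ = (0 : K.cycles 0 ⟶ K.X 1) c := by rw [K.iCycles_d 0 1]
      _ = 0 := rfl
  let g' : P.complex.X 0 ⟶ Y := g
  have hcond : P.complex.d 1 0 ≫ g' = 0 := hcycle
  obtain ⟨h', hh'⟩ := CokernelCofork.IsColimit.desc' P.isColimitCokernelCofork g' hcond
  refine ⟨h', fun h0 => hgne ?_⟩
  have : g' = P.π.f 0 ≫ (h' : ((ChainComplex.single₀ (ModuleCat A)).obj X).X 0 ⟶ Y) := hh'.symm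
  have h0'' : (h' : ((ChainComplex.single₀ (ModuleCat A)).obj X).X 0 ⟶ Y) = 0 := h0
  have h2 : g' = 0 := by rw [this, h0'']; exact Limits.comp_zero
  exact h2


section SocleKill

variable {R : Type} [CommRing R] [IsLocalRing R]
  {M : Type} [AddCommGroup M] [Module R M] [Module.Finite R M]

lemma central_nonsurj_kills_socle (φ : Module.End R M)
    (hφ : φ ∈ Subalgebra.center R (Module.End R M))
    (hs : ¬ Function.Surjective φ) {v : M}
    (hv : ∀ r ∈ IsLocalRing.maximalIdeal R, r • v = 0) : φ v = 0 := by
  classical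
  set N : Submodule R M := LinearMap.range φ ⊔ (IsLocalRing.maximalIdeal R) • ⊤ with hNdef
  have hN : N ≠ ⊤ := by
    intro h
    apply hs
    rw [← LinearMap.range_eq_top]
    refine top_le_iff.mp ?_
    refine Submodule.le_of_le_smul_of_le_jacobson_bot (I := IsLocalRing.maximalIdeal R) Module.Finite.fg_top ?_ ?_
    · rw [IsLocalRing.jacobson_eq_maximalIdeal ⊥ bot_ne_top]
    · exact h.symm.le
  haveI : IsCoatomic (Submodule R M) := by
    apply CompleteLattice.coatomic_of_top_compact
    exact (Submodule.fg_iff_compact _).mp Module.Finite.fg_top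
  obtain h | ⟨P, hP, hNP⟩ := eq_top_or_exists_le_coatom N
  · exact absurd h hN
  obtain ⟨m₁, hm₁⟩ : ∃ m₁, m₁ ∉ P := by
    by_contra h
    push_neg at h
    exact hP.1 (eq_top_iff.2 fun x _ => h x)
  have hspan : P ⊔ Submodule.span R {m₁} = ⊤ := by
    refine hP.2 _ (left_lt_sup.2 ?_)
    intro hle
    exact hm₁ (hle (Submodule.mem_span_singleton_self m₁))
  have claim1 : ∀ x : M, ∃ r : R, x - r • m₁ ∈ P := by
    intro x
    have hx : x ∈ P ⊔ Submodule.span R {m₁} := hspan ▸ Submodule.mem_top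
    obtain ⟨p, hp, y, hy, rfl⟩ := Submodule.mem_sup.1 hx
    obtain ⟨r, rfl⟩ := Submodule.mem_span_singleton.1 hy
    exact ⟨r, by simpa using hp⟩
  have claim2 : ∀ r : R, r • m₁ ∈ P → r • v = 0 := by
    intro r hr
    by_cases hu : IsUnit r
    · exfalso
      apply hm₁
      have := P.smul_mem (↑hu.unit⁻¹ : R) hr
      rwa [smul_smul, IsUnit.val_inv_mul, one_smul] at this
    · exact hv r ((IsLocalRing.mem_maximalIdeal r).mpr hu)
  let f : M → M := fun x => Classical.choose (claim1 x) • v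
  have key : ∀ (x : M) (r : R), x - r • m₁ ∈ P → f x = r • v := by
    intro x r hr
    have h1 := Classical.choose_spec (claim1 x)
    have h2 : (Classical.choose (claim1 x) - r) • m₁ ∈ P := by
      have h3 := P.sub_mem hr h1
      convert h3 using 1
      rw [sub_smul]
      abel
    have h4 := claim2 _ h2
    rw [sub_smul, sub_eq_zero] at h4
    exact h4
  have fadd : ∀ x y, f (x + y) = f x + f y := by
    intro x y
    have hx := Classical.choose_spec (claim1 x)
    have hy := Classical.choose_spec (claim1 y)
    have hxy : (x + y) - (Classical.choose (claim1 x) + Classical.choose (claim1 y)) • m₁ ∈ P := by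
      have := P.add_mem hx hy
      convert this using 1
      rw [add_smul]
      abel
    rw [key _ _ hxy, add_smul]
  have fsmul : ∀ (c : R) (x : M), f (c • x) = c • f x := by
    intro c x
    have hx := Classical.choose_spec (claim1 x)
    have hcx : c • x - (c * Classical.choose (claim1 x)) • m₁ ∈ P := by
      have := P.smul_mem c hx
      convert this using 1
      rw [mul_smul, smul_sub]
    rw [key _ _ hcx, mul_smul]
  let e : Module.End R M :=
    { toFun := f, map_add' := fadd, map_smul' := fsmul }
  have hcomm : e * φ = φ * e := Subalgebra.mem_center_iff.1 hφ e
  have hem : e m₁ = v := by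
    have h1 : m₁ - (1 : R) • m₁ ∈ P := by simp
    have := key m₁ 1 h1
    rw [one_smul] at this
    exact this
  have heφ : e (φ m₁) = 0 := by
    have h1 : φ m₁ - (0 : R) • m₁ ∈ P := by
      simpa using hNP (Submodule.mem_sup_left (LinearMap.mem_range_self φ m₁))
    have := key _ 0 h1
    rw [zero_smul] at this
    exact this
  calc φ v = φ (e m₁) := by rw [hem]
    _ = (φ * e) m₁ := rfl
    _ = (e * φ) m₁ := by rw [hcomm]
    _ = e (φ m₁) := rfl
    _ = 0 := heφ


omit [IsLocalRing R] in
lemma central_unit_of_surjective (a : Subalgebra.center R (Module.End R M))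
    (hsurj : Function.Surjective (a.1 : M → M)) : IsUnit a := by
  have hbij : Function.Bijective a.1 :=
    OrzechProperty.bijective_of_surjective_endomorphism (R := R) a.1 hsurj
  obtain ⟨u, hu⟩ := (Module.End.isUnit_iff a.1).2 hbij
  have hcentral : (↑u⁻¹ : Module.End R M) ∈ Subalgebra.center R (Module.End R M) := by
    rw [Subalgebra.mem_center_iff]
    intro g
    have hg : (↑u : Module.End R M) * g = g * ↑u := by
      rw [hu]; exact (Subalgebra.mem_center_iff.1 a.2 g).symm
    calc g * ↑u⁻¹ = ↑u⁻¹ * ↑u * (g * ↑u⁻¹) := by rw [u.inv_mul, one_mul]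
      _ = ↑u⁻¹ * (↑u * g) * ↑u⁻¹ := by rw [mul_assoc, mul_assoc, mul_assoc]
      _ = ↑u⁻¹ * (g * ↑u) * ↑u⁻¹ := by rw [hg]
      _ = ↑u⁻¹ * g * (↑u * ↑u⁻¹) := by rw [mul_assoc, mul_assoc, mul_assoc]
      _ = ↑u⁻¹ * g := by rw [u.mul_inv, mul_one]
  refine IsUnit.of_mul_eq_one (a := a) ⟨↑u⁻¹, hcentral⟩ ?_
  ext1
  show a.1 * ↑u⁻¹ = 1
  rw [← hu, u.mul_inv]

end SocleKill

theorem socle_exists (R : Type) [CommRing R] [IsLocalRing R]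
    (M : Type) [AddCommGroup M] [Module R M]
    (hdepth : moduleDepth R M = 0) :
    ∃ v : M, v ≠ 0 ∧ ∀ r ∈ IsLocalRing.maximalIdeal R, r • v = 0 := by
  have h0 : (0 : ℕ∞) ∈ {d : ℕ∞ | ∃ n : ℕ, d = n ∧
      Nontrivial (((Ext R (ModuleCat R) n).obj
        (Opposite.op (ModuleCat.of R (IsLocalRing.ResidueField R)))).obj (ModuleCat.of R M))} := by
    by_contra hmem
    have h1 : (1 : ℕ∞) ≤ moduleDepth R M := by
      apply le_sInf
      rintro d ⟨n, rfl, hn⟩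
      rcases Nat.eq_zero_or_pos n with rfl | hpos
      · exact absurd ⟨0, rfl, hn⟩ hmem
      · exact_mod_cast hpos
    rw [hdepth] at h1
    exact absurd h1 (by simp)
  obtain ⟨n, hn, hnt⟩ := h0
  obtain rfl : n = 0 := by exact_mod_cast hn.symm
  obtain ⟨g, hg⟩ := exists_hom_of_nontrivial_ext0 R
    (ModuleCat.of R (IsLocalRing.ResidueField R)) (ModuleCat.of R M) hnt
  have hsmul1 : ∀ r : R, r • (1 : IsLocalRing.ResidueField R) = IsLocalRing.residue R r := by
    intro r
    rw [← Algebra.algebraMap_eq_smul_one]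
    rfl
  refine ⟨g (1 : IsLocalRing.ResidueField R), ?_, ?_⟩
  · intro h0
    apply hg
    ext x
    obtain ⟨r, rfl⟩ := Ideal.Quotient.mk_surjective x
    have : (Ideal.Quotient.mk (IsLocalRing.maximalIdeal R) r : IsLocalRing.ResidueField R)
        = r • 1 := (hsmul1 r).symm
    have h0' : g.hom (1 : IsLocalRing.ResidueField R) = 0 := h0
    have this' : g.hom (Ideal.Quotient.mk _ r) = g.hom (r • (1 : IsLocalRing.ResidueField R)) :=
      congrArg g.hom this
    show g.hom (Ideal.Quotient.mk _ r) = 0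
    rw [this', LinearMap.map_smul, h0', smul_zero]
  · intro r hr
    have : r • g (1 : IsLocalRing.ResidueField R) = g (r • (1 : IsLocalRing.ResidueField R)) :=
      (g.hom.map_smul r _).symm
    have h2 : IsLocalRing.residue R r = 0 := Ideal.Quotient.eq_zero_iff_mem.mpr hr
    rw [this, hsmul1, h2, map_zero]



/-- Let `(R,𝔪)` be a commutative noetherian local ring and `M` a finitely generated
`R`-module with `depth_R M = 0`.  Then the center `Z(End_R M)` is a local ring. -/
theorem center_end_isLocalRing_of_depth_zero
    (R : Type) [CommRing R] [IsNoetherianRing R] [IsLocalRing R]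
    (M : Type) [AddCommGroup M] [Module R M] [Module.Finite R M]
    (hdepth : moduleDepth R M = 0) :
    IsLocalRing (Subalgebra.center R (Module.End R M)) := by
  classical
  obtain ⟨v, hv0, hv⟩ := socle_exists R M hdepth
  haveI : Nontrivial (Subalgebra.center R (Module.End R M)) := by
    refine ⟨0, 1, fun h => hv0 ?_⟩
    have h' : (0 : Module.End R M) = 1 := congrArg Subtype.val h
    calc v = (1 : Module.End R M) v := rfl
      _ = (0 : Module.End R M) v := by rw [h']
      _ = 0 := rfl
  apply IsLocalRing.of_nonunits_add
  intro a b ha hb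
  rw [mem_nonunits_iff] at ha hb ⊢
  intro hab
  have hka : a.1 v = 0 := central_nonsurj_kills_socle a.1 a.2
      (fun hs => ha (central_unit_of_surjective a hs)) hv
  have hkb : b.1 v = 0 := central_nonsurj_kills_socle b.1 b.2
      (fun hs => hb (central_unit_of_surjective b hs)) hv
  have hker : (a + b).1 v = 0 := by
    have h1 : (a + b).1 = a.1 + b.1 := rfl
    rw [h1, LinearMap.add_apply, hka, hkb, add_zero]
  have hu : IsUnit ((a + b).1) := hab.map (Subalgebra.center R (Module.End R M)).val
  have hinj := ((Module.End.isUnit_iff _).1 hu).injective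
  apply hv0
  apply hinj
  rw [hker, map_zero]
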